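/- Let A ∈ ℝ^{d×d}, B ∈ ℝ^{d×k}, and K ∈ ℝ^{k×d} with ‖K‖ ≤ κ, such that M = A + BK is (κ,γ)-strongly stable. Let Q ∈ ℝ^{d×d} and R ∈ ℝ^{k×k} be symmetric positive semidefinite with ‖Q‖ ≤ α₁ and ‖R‖ ≤ α₁, and let P be a symmetric positive definite matrix satisfying the Lyapunov equation P = Q + KᵀRK + MᵀPM. Fix x_1 ∈ ℝ^d, let w_1, w_2, … be i.i.d. centered Gaussian vectors in ℝ^d with covariance σ²I, and define x_{s+1} = M x_s + w_s. Then for every integer t ≥ 1, E[Σ_{s=1}^t x_sᵀ(Q + KᵀRK)x_s] ≤ t·σ²·tr(P) + (2α₁κ⁴/γ)·‖x_1‖². -/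

import Mathlib

noncomputable section

/-- The operator (spectral) norm of a real matrix: the operator norm of the induced
linear map between Euclidean spaces. -/
def opNorm {m n : ℕ} (A : Matrix (Fin m) (Fin n) ℝ) : ℝ :=
  ‖LinearMap.toContinuousLinearMap (Matrix.toEuclideanLin A)‖

/-- Euclidean norm of a vector in `ℝ^d`. -/
def vnorm {d : ℕ} (x : Fin d → ℝ) : ℝ := Real.sqrt (∑ i, x i ^ 2)

/-- A matrix `M` is `(κ,γ)`-strongly stable (for `κ ≥ 1` and `0 < γ ≤ 1`) if
`M = H L H⁻¹` for some invertible `H` and some `L` with `‖L‖ ≤ 1 − γ` and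
`‖H‖·‖H⁻¹‖ ≤ κ`, where `‖·‖` is the operator (spectral) norm. -/
def StronglyStable {d : ℕ} (κ γ : ℝ) (M : Matrix (Fin d) (Fin d) ℝ) : Prop :=
  1 ≤ κ ∧ 0 < γ ∧ γ ≤ 1 ∧
    ∃ H L : Matrix (Fin d) (Fin d) ℝ, IsUnit H ∧ M = H * L * H⁻¹ ∧
      opNorm L ≤ 1 - γ ∧ opNorm H * opNorm H⁻¹ ≤ κ


open MeasureTheory ProbabilityTheory Matrix
open scoped NNReal ENNReal

/-- The trajectory `x_{s+1} = M x_s + w_s` (noise indexed from 1) started at `x 1 = x₁`. -/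
def stateTraj {d : ℕ} (M : Matrix (Fin d) (Fin d) ℝ) (x₁ : Fin d → ℝ)
    (w : ℕ → Fin d → ℝ) : ℕ → Fin d → ℝ
  | 0 => x₁
  | 1 => x₁
  | s + 2 => M.mulVec (stateTraj M x₁ w (s + 1)) + w (s + 1)

/-- Extend finitely many noise vectors `(w_1, …, w_t)` to a sequence indexed by `ℕ`. -/
def noiseExt {t d : ℕ} (g : Fin t → Fin d → ℝ) : ℕ → Fin d → ℝ := fun s =>
  if h : 1 ≤ s ∧ s ≤ t then g ⟨s - 1, by omega⟩ else 0

/-! ### Auxiliary lemmas -/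

section Aux
open Real Set

/- 1-D Gaussian moment computations. -/

lemma odd_gauss_integral_zero {b : ℝ} : ∫ x : ℝ, x * Real.exp (-b * x ^ 2) = 0 := by
  set f : ℝ → ℝ := fun x => x * Real.exp (-b * x ^ 2) with hf
  have A : MeasurableEmbedding (fun x : ℝ => -x) := (Homeomorph.neg ℝ).measurableEmbedding
  have h1 : ∫ x : ℝ, f x = ∫ x : ℝ, f (-x) := by
    conv_lhs => rw [← Measure.map_neg_eq_self (volume : Measure ℝ)]
    exact A.integral_map _
  have h2 : ∫ x : ℝ, f (-x) = - ∫ x : ℝ, f x := by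
    rw [← integral_neg]
    congr 1; funext x; simp only [hf, neg_sq]; ring
  linarith [h1, h2]

lemma sq_gauss_integral {b : ℝ} (hb : 0 < b) :
    ∫ x : ℝ, x ^ 2 * Real.exp (-b * x ^ 2) = b ^ (-(3:ℝ)/2) * Real.sqrt π / 2 := by
  have h1 : ∫ x : ℝ, x ^ 2 * Real.exp (-b * x ^ 2)
      = 2 * ∫ x in Ioi (0:ℝ), x ^ 2 * Real.exp (-b * x ^ 2) := by
    rw [← integral_comp_abs (f := fun x => x ^ 2 * Real.exp (-b * x ^ 2))]
    congr 1; funext x; rw [sq_abs]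
  have h2 : ∫ x in Ioi (0:ℝ), x ^ 2 * Real.exp (-b * x ^ 2)
      = ∫ x in Ioi (0:ℝ), x ^ (2:ℝ) * Real.exp (-b * x ^ (2:ℝ)) := by
    congr 1; funext x
    rw [show (2:ℝ) = ((2:ℕ):ℝ) by norm_num, Real.rpow_natCast]
  have h3 := integral_rpow_mul_exp_neg_mul_rpow (p := 2) (q := 2) (b := b)
    (by norm_num) (by norm_num) hb
  have hG : Real.Gamma ((2 + 1) / 2) = Real.sqrt π / 2 := by
    rw [show ((2:ℝ) + 1)/2 = 1/2 + 1 by norm_num, Real.Gamma_add_one (by norm_num),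
      Real.Gamma_one_half_eq]
    ring
  rw [h1, h2, h3, hG]
  rw [show (-((2:ℝ)+1)/2) = -(3:ℝ)/2 by norm_num]
  ring

lemma gaussianPDFReal_eq (v : ℝ≥0) :
    gaussianPDFReal 0 v = fun x =>
      (Real.sqrt (2 * π * v))⁻¹ * Real.exp (-(2 * (v:ℝ))⁻¹ * x ^ 2) := by
  funext x
  rw [gaussianPDFReal]
  congr 1
  rw [sub_zero]
  ring

lemma gaussian_integral_eq (v : ℝ≥0) (hv : v ≠ 0) (f : ℝ → ℝ) :
    ∫ x, f x ∂(gaussianReal 0 v) = ∫ x, gaussianPDFReal 0 v x * f x := by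
  rw [gaussianReal_of_var_ne_zero 0 hv]
  have mp : Measurable fun x => (gaussianPDFReal 0 v x).toNNReal :=
    (measurable_gaussianPDFReal 0 v).real_toNNReal
  have : gaussianPDF 0 v = fun x => ((gaussianPDFReal 0 v x).toNNReal : ℝ≥0∞) := rfl
  rw [this, integral_withDensity_eq_integral_smul mp f]
  congr 1; funext x
  simp [NNReal.smul_def, Real.coe_toNNReal _ (gaussianPDFReal_nonneg 0 v x)]

lemma gaussian_integrable_iff (v : ℝ≥0) (hv : v ≠ 0) (f : ℝ → ℝ) :
    Integrable f (gaussianReal 0 v) ↔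
      Integrable (fun x => gaussianPDFReal 0 v x * f x) volume := by
  rw [gaussianReal_of_var_ne_zero 0 hv]
  have mp : Measurable fun x => (gaussianPDFReal 0 v x).toNNReal :=
    (measurable_gaussianPDFReal 0 v).real_toNNReal
  have : gaussianPDF 0 v = fun x => ((gaussianPDFReal 0 v x).toNNReal : ℝ≥0∞) := rfl
  rw [this, integrable_withDensity_iff_integrable_smul mp]
  constructor <;> intro h <;> refine h.congr (Filter.Eventually.of_forall fun x => ?_) <;>
    simp [NNReal.smul_def, Real.coe_toNNReal _ (gaussianPDFReal_nonneg 0 v x)]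

lemma gauss_pos {v : ℝ≥0} (hv : v ≠ 0) : 0 < (v:ℝ) := by positivity

lemma gauss_b_pos {v : ℝ≥0} (hv : v ≠ 0) : 0 < (2 * (v:ℝ))⁻¹ := by
  have := gauss_pos hv; positivity

lemma gauss_int_id {v : ℝ≥0} (hv : v ≠ 0) : Integrable (fun x : ℝ => x) (gaussianReal 0 v) := by
  rw [gaussian_integrable_iff v hv]
  have : (fun x => gaussianPDFReal 0 v x * x)
      = fun x => (Real.sqrt (2 * π * v))⁻¹ * (x * Real.exp (-(2 * (v:ℝ))⁻¹ * x ^ 2)) := by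
    funext x; rw [gaussianPDFReal_eq]; ring
  rw [this]
  exact (integrable_mul_exp_neg_mul_sq (gauss_b_pos hv)).const_mul _

lemma gauss_int_sq {v : ℝ≥0} (hv : v ≠ 0) :
    Integrable (fun x : ℝ => x * x) (gaussianReal 0 v) := by
  rw [gaussian_integrable_iff v hv]
  have : (fun x => gaussianPDFReal 0 v x * (x * x))
      = fun x => (Real.sqrt (2 * π * v))⁻¹ * (x ^ 2 * Real.exp (-(2 * (v:ℝ))⁻¹ * x ^ 2)) := by
    funext x; rw [gaussianPDFReal_eq]; ring
  rw [this]
  refine Integrable.const_mul ?_ _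
  have h := integrable_rpow_mul_exp_neg_mul_sq (gauss_b_pos hv) (s := 2) (by norm_num)
  refine h.congr (Filter.Eventually.of_forall fun x => ?_)
  show x ^ (2:ℝ) * Real.exp (-(2 * (v:ℝ))⁻¹ * x ^ 2) = x ^ 2 * Real.exp (-(2 * (v:ℝ))⁻¹ * x ^ 2)
  rw [show (2:ℝ) = ((2:ℕ):ℝ) by norm_num, Real.rpow_natCast]

lemma gauss_mean {v : ℝ≥0} (hv : v ≠ 0) : ∫ x, x ∂(gaussianReal 0 v) = 0 := by
  rw [gaussian_integral_eq v hv]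
  have : (fun x => gaussianPDFReal 0 v x * x)
      = fun x => (Real.sqrt (2 * π * v))⁻¹ * (x * Real.exp (-(2 * (v:ℝ))⁻¹ * x ^ 2)) := by
    funext x; rw [gaussianPDFReal_eq]; ring
  rw [this, integral_const_mul, odd_gauss_integral_zero, mul_zero]

lemma gauss_second_moment {v : ℝ≥0} (hv : v ≠ 0) : ∫ x, x * x ∂(gaussianReal 0 v) = (v:ℝ) := by
  rw [gaussian_integral_eq v hv]
  have : (fun x => gaussianPDFReal 0 v x * (x * x))
      = fun x => (Real.sqrt (2 * π * v))⁻¹ * (x ^ 2 * Real.exp (-(2 * (v:ℝ))⁻¹ * x ^ 2)) := by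
    funext x; rw [gaussianPDFReal_eq]; ring
  rw [this, integral_const_mul, sq_gauss_integral (gauss_b_pos hv)]
  have hvpos := gauss_pos hv
  have h2v : (0:ℝ) < 2 * v := by positivity
  have hrpow : ((2 * (v:ℝ))⁻¹) ^ (-(3:ℝ)/2) = (2 * (v:ℝ)) ^ ((3:ℝ)/2) := by
    rw [Real.inv_rpow h2v.le, ← Real.rpow_neg h2v.le]
    norm_num
  have h32 : (2 * (v:ℝ)) ^ ((3:ℝ)/2) = (2 * (v:ℝ)) * Real.sqrt (2 * v) := by
    rw [show (3:ℝ)/2 = 1 + 1/2 by norm_num, Real.rpow_add h2v, Real.rpow_one,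
      ← Real.sqrt_eq_rpow]
  have hsqrt : Real.sqrt (2 * π * v) = Real.sqrt (2 * v) * Real.sqrt π := by
    rw [← Real.sqrt_mul (by positivity : (0:ℝ) ≤ 2 * (v:ℝ)) π]
    congr 1; ring
  rw [hrpow, h32, hsqrt]
  have hs2v : 0 < Real.sqrt (2 * (v:ℝ)) := Real.sqrt_pos.mpr h2v
  have hspi : 0 < Real.sqrt π := Real.sqrt_pos.mpr Real.pi_pos
  field_simp

/- Product-measure factorization lemmas. -/

section PiAux
variable {ι : Type*} [Fintype ι] [DecidableEq ι] {E : Type*} [MeasurableSpace E]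

lemma pi_integral_eval (ν : Measure E) [IsProbabilityMeasure ν] (φ : E → ℝ) (j : ι) :
    ∫ g : ι → E, φ (g j) ∂(Measure.pi fun _ : ι => ν) = ∫ y, φ y ∂ν := by
  letI : MeasureSpace E := ⟨ν⟩
  haveI : SigmaFinite (volume : Measure E) := inferInstanceAs (SigmaFinite ν)
  have key := MeasureTheory.integral_fintype_prod_volume_eq_prod (𝕜 := ℝ) (ι := ι)
    (fun (s : ι) (y : E) => if s = j then φ y else 1)
  calc ∫ g : ι → E, φ (g j) ∂(Measure.pi fun _ : ι => ν)
      = ∫ g : ι → E, ∏ s, (if s = j then φ (g s) else 1) := by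
        congr 1; funext g; rw [Finset.prod_ite_eq']; simp
    _ = ∏ s, ∫ y, (if s = j then φ y else 1) ∂ν := key
    _ = ∏ s, (if s = j then ∫ y, φ y ∂ν else 1) := by
        refine Finset.prod_congr rfl fun s _ => ?_
        split_ifs with h
        · rfl
        · simp
    _ = ∫ y, φ y ∂ν := by rw [Finset.prod_ite_eq']; simp

lemma pi_integral_eval_mul (ν : Measure E) [IsProbabilityMeasure ν] (φ ψ : E → ℝ) (j j' : ι) :
    ∫ g : ι → E, φ (g j) * ψ (g j') ∂(Measure.pi fun _ : ι => ν)
      = if j = j' then ∫ y, φ y * ψ y ∂ν else (∫ y, φ y ∂ν) * ∫ y, ψ y ∂ν := by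
  rcases eq_or_ne j j' with rfl | hjj
  · rw [if_pos rfl]
    exact pi_integral_eval ν (fun y => φ y * ψ y) j
  · rw [if_neg hjj]
    letI : MeasureSpace E := ⟨ν⟩
    haveI : SigmaFinite (volume : Measure E) := inferInstanceAs (SigmaFinite ν)
    have key := MeasureTheory.integral_fintype_prod_volume_eq_prod (𝕜 := ℝ) (ι := ι)
      (fun (s : ι) (y : E) => (if s = j then φ y else 1) * (if s = j' then ψ y else 1))
    calc ∫ g : ι → E, φ (g j) * ψ (g j') ∂(Measure.pi fun _ : ι => ν)
        = ∫ g : ι → E, ∏ s, ((if s = j then φ (g s) else 1) * (if s = j' then ψ (g s) else 1)) := by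
          congr 1; funext g
          rw [Finset.prod_mul_distrib, Finset.prod_ite_eq', Finset.prod_ite_eq']
          simp
      _ = ∏ s, ∫ y, ((if s = j then φ y else 1) * (if s = j' then ψ y else 1)) ∂ν := key
      _ = ∏ s, ((if s = j then ∫ y, φ y ∂ν else 1) * (if s = j' then ∫ y, ψ y ∂ν else 1)) := by
          refine Finset.prod_congr rfl fun s _ => ?_
          rcases eq_or_ne s j with rfl | hj
          · simp [hjj]
          · rcases eq_or_ne s j' with rfl | hj'
            · simp [hj]
            · simp [hj, hj']
      _ = (∫ y, φ y ∂ν) * ∫ y, ψ y ∂ν := by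
          rw [Finset.prod_mul_distrib, Finset.prod_ite_eq', Finset.prod_ite_eq']
          simp

lemma pi_integrable_eval (ν : Measure E) [IsProbabilityMeasure ν] {φ : E → ℝ}
    (hφ : Integrable φ ν) (j : ι) :
    Integrable (fun g : ι → E => φ (g j)) (Measure.pi fun _ : ι => ν) := by
  letI : MeasureSpace E := ⟨ν⟩
  haveI : SigmaFinite (volume : Measure E) := inferInstanceAs (SigmaFinite ν)
  have hfun : (fun g : ι → E => φ (g j))
      = fun g => ∏ s, (if s = j then φ (g s) else 1) := by
    funext g; rw [Finset.prod_ite_eq']; simp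
  rw [hfun]
  refine MeasureTheory.Integrable.fintype_prod (𝕜 := ℝ)
    (f := fun (s : ι) (y : E) => if s = j then φ y else 1) fun s => ?_
  rcases eq_or_ne s j with rfl | hs
  · simpa using hφ
  · simp only [if_neg hs]
    exact integrable_const 1

lemma pi_integrable_eval_mul (ν : Measure E) [IsProbabilityMeasure ν] {φ ψ : E → ℝ}
    (hφ : Integrable φ ν) (hψ : Integrable ψ ν) (hφψ : Integrable (fun y => φ y * ψ y) ν)
    (j j' : ι) :
    Integrable (fun g : ι → E => φ (g j) * ψ (g j')) (Measure.pi fun _ : ι => ν) := by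
  letI : MeasureSpace E := ⟨ν⟩
  haveI : SigmaFinite (volume : Measure E) := inferInstanceAs (SigmaFinite ν)
  have hfun : (fun g : ι → E => φ (g j) * ψ (g j'))
      = fun g => ∏ s, ((if s = j then φ (g s) else 1) * (if s = j' then ψ (g s) else 1)) := by
    funext g
    rw [Finset.prod_mul_distrib, Finset.prod_ite_eq', Finset.prod_ite_eq']
    simp
  rw [hfun]
  refine MeasureTheory.Integrable.fintype_prod (𝕜 := ℝ)
    (f := fun (s : ι) (y : E) => (if s = j then φ y else 1) * (if s = j' then ψ y else 1))
    fun s => ?_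
  rcases eq_or_ne s j with rfl | hj
  · rcases eq_or_ne s j' with rfl | hj'
    · simpa using hφψ
    · simpa [hj'] using hφ
  · rcases eq_or_ne s j' with rfl | hj'
    · simpa [hj] using hψ
    · simpa [hj, hj'] using integrable_const (1:ℝ)

end PiAux

/- Atoms over the double product Gaussian measure. -/

section Atoms
variable {t d : ℕ} {v : ℝ≥0}

local notation "μd" => Measure.pi (fun _ : Fin d => gaussianReal 0 v)
local notation "μt" => Measure.pi (fun _ : Fin t => Measure.pi (fun _ : Fin d => gaussianReal 0 v))

lemma atom_eval (hv : v ≠ 0) (j : Fin t) (i : Fin d) :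
    ∫ g : Fin t → Fin d → ℝ, g j i ∂(μt) = 0 := by
  rw [pi_integral_eval (ι := Fin t) (μd) (fun y : Fin d → ℝ => y i) j,
    pi_integral_eval (ι := Fin d) (gaussianReal 0 v) (fun x : ℝ => x) i, gauss_mean hv]

lemma atom_eval_mul (hv : v ≠ 0) (j j' : Fin t) (i i' : Fin d) :
    ∫ g : Fin t → Fin d → ℝ, g j i * g j' i' ∂(μt)
      = if j = j' then (if i = i' then (v:ℝ) else 0) else 0 := by
  rw [pi_integral_eval_mul (ι := Fin t) (μd) (fun y : Fin d → ℝ => y i)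
    (fun y : Fin d → ℝ => y i') j j']
  rw [pi_integral_eval_mul (ι := Fin d) (gaussianReal 0 v) (fun x : ℝ => x) (fun x : ℝ => x) i i']
  rw [pi_integral_eval (ι := Fin d) (gaussianReal 0 v) (fun x : ℝ => x) i,
    pi_integral_eval (ι := Fin d) (gaussianReal 0 v) (fun x : ℝ => x) i',
    gauss_mean hv, gauss_second_moment hv]
  simp

lemma atom_integrable (hv : v ≠ 0) (j : Fin t) (i : Fin d) :
    Integrable (fun g : Fin t → Fin d → ℝ => g j i) (μt) := by
  exact pi_integrable_eval (ι := Fin t) (μd)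
    (pi_integrable_eval (ι := Fin d) (gaussianReal 0 v) (gauss_int_id hv) i) j

lemma atom_integrable_mul (hv : v ≠ 0) (j j' : Fin t) (i i' : Fin d) :
    Integrable (fun g : Fin t → Fin d → ℝ => g j i * g j' i') (μt) := by
  refine pi_integrable_eval_mul (ι := Fin t) (μd)
    (φ := fun y : Fin d → ℝ => y i) (ψ := fun y : Fin d → ℝ => y i') ?_ ?_ ?_ j j'
  · exact pi_integrable_eval (ι := Fin d) (gaussianReal 0 v) (gauss_int_id hv) i
  · exact pi_integrable_eval (ι := Fin d) (gaussianReal 0 v) (gauss_int_id hv) i'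
  · exact pi_integrable_eval_mul (ι := Fin d) (gaussianReal 0 v)
      (gauss_int_id hv) (gauss_int_id hv) (gauss_int_sq hv) i i'

lemma lin_integrable (hv : v ≠ 0) (b : Fin d → ℝ) (j : Fin t) :
    Integrable (fun g : Fin t → Fin d → ℝ => dotProduct b (g j)) (μt) := by
  have : (fun g : Fin t → Fin d → ℝ => dotProduct b (g j))
      = fun g => ∑ i, b i * g j i := rfl
  rw [this]
  exact integrable_finset_sum _ fun i _ => (atom_integrable hv j i).const_mul (b i)

lemma lin_integral (hv : v ≠ 0) (b : Fin d → ℝ) (j : Fin t) :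
    ∫ g : Fin t → Fin d → ℝ, dotProduct b (g j) ∂(μt) = 0 := by
  have : (fun g : Fin t → Fin d → ℝ => dotProduct b (g j))
      = fun g => ∑ i, b i * g j i := rfl
  rw [this, integral_finset_sum _ fun i _ => (atom_integrable hv j i).const_mul (b i)]
  refine Finset.sum_eq_zero fun i _ => ?_
  rw [integral_const_mul, atom_eval hv j i, mul_zero]

lemma bil_repr (Emat : Matrix (Fin d) (Fin d) ℝ) (j j' : Fin t) :
    (fun g : Fin t → Fin d → ℝ => dotProduct (g j) (Emat.mulVec (g j')))
      = fun g => ∑ p, ∑ q, Emat p q * (g j p * g j' q) := by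
  funext g
  simp only [dotProduct, Matrix.mulVec, Finset.mul_sum]
  refine Finset.sum_congr rfl fun p _ => Finset.sum_congr rfl fun q _ => by ring

lemma bil_integrable (hv : v ≠ 0) (Emat : Matrix (Fin d) (Fin d) ℝ) (j j' : Fin t) :
    Integrable (fun g : Fin t → Fin d → ℝ =>
      dotProduct (g j) (Emat.mulVec (g j'))) (μt) := by
  rw [bil_repr]
  exact integrable_finset_sum _ fun p _ => integrable_finset_sum _ fun q _ =>
    (atom_integrable_mul hv j j' p q).const_mul (Emat p q)

lemma bil_integral (hv : v ≠ 0) (Emat : Matrix (Fin d) (Fin d) ℝ) (j j' : Fin t) :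
    ∫ g : Fin t → Fin d → ℝ, dotProduct (g j) (Emat.mulVec (g j')) ∂(μt)
      = if j = j' then (v:ℝ) * Matrix.trace Emat else 0 := by
  rw [bil_repr]
  rw [integral_finset_sum _ fun p _ => integrable_finset_sum _ fun q _ =>
    (atom_integrable_mul hv j j' p q).const_mul (Emat p q)]
  have : ∀ p : Fin d, ∫ g : Fin t → Fin d → ℝ, (∑ q, Emat p q * (g j p * g j' q)) ∂(μt)
      = ∑ q, Emat p q * (if j = j' then (if p = q then (v:ℝ) else 0) else 0) := by
    intro p
    rw [integral_finset_sum _ fun q _ => (atom_integrable_mul hv j j' p q).const_mul (Emat p q)]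
    exact Finset.sum_congr rfl fun q _ => by rw [integral_const_mul, atom_eval_mul hv j j' p q]
  rw [Finset.sum_congr rfl fun p _ => this p]
  rcases eq_or_ne j j' with rfl | hjj
  · simp only [if_pos rfl]
    rw [show Matrix.trace Emat = ∑ p, Emat p p from rfl, Finset.mul_sum]
    refine Finset.sum_congr rfl fun p _ => ?_
    rw [Finset.sum_eq_single p]
    · simp [mul_comm]
    · intro q _ hq; simp [Ne.symm hq]
    · intro h; exact absurd (Finset.mem_univ p) h
  · simp [hjj]

end Atoms

/- Euclidean/operator-norm helpers. -/

def ev {d : ℕ} (x : Fin d → ℝ) : EuclideanSpace ℝ (Fin d) :=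
  (WithLp.equiv 2 (Fin d → ℝ)).symm x

lemma ev_norm_sq {d : ℕ} (x : Fin d → ℝ) : ‖ev x‖ ^ 2 = ∑ i, x i ^ 2 := by
  rw [EuclideanSpace.norm_eq, Real.sq_sqrt (by positivity)]
  refine Finset.sum_congr rfl fun i _ => ?_
  rw [Real.norm_eq_abs, sq_abs]
  rfl

lemma opNorm_nonneg {m n : ℕ} (A : Matrix (Fin m) (Fin n) ℝ) : 0 ≤ opNorm A := norm_nonneg _

lemma ev_mulVec_norm_le {m n : ℕ} (C : Matrix (Fin m) (Fin n) ℝ) (x : Fin n → ℝ) :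
    ‖ev (C.mulVec x)‖ ≤ opNorm C * ‖ev x‖ := by
  have h := (LinearMap.toContinuousLinearMap (Matrix.toEuclideanLin C)).le_opNorm (ev x)
  have he : (LinearMap.toContinuousLinearMap (Matrix.toEuclideanLin C)) (ev x)
      = ev (C.mulVec x) := by
    rw [LinearMap.coe_toContinuousLinearMap']
    rw [Matrix.toEuclideanLin_apply]
    rfl
  rwa [he] at h

lemma dot_eq_inner {d : ℕ} (x y : Fin d → ℝ) :
    dotProduct x y = inner ℝ (ev x) (ev y) := by
  rw [PiLp.inner_apply]
  refine Finset.sum_congr rfl fun i _ => ?_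
  simp [ev, mul_comm]

lemma dot_mulVec_le {d : ℕ} (C : Matrix (Fin d) (Fin d) ℝ) (x y : Fin d → ℝ) :
    dotProduct x (C.mulVec y) ≤ opNorm C * (‖ev x‖ * ‖ev y‖) := by
  rw [dot_eq_inner]
  calc inner ℝ (ev x) (ev (C.mulVec y)) ≤ ‖ev x‖ * ‖ev (C.mulVec y)‖ :=
        real_inner_le_norm _ _
    _ ≤ ‖ev x‖ * (opNorm C * ‖ev y‖) :=
        mul_le_mul_of_nonneg_left (ev_mulVec_norm_le C y) (norm_nonneg _)
    _ = opNorm C * (‖ev x‖ * ‖ev y‖) := by ring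

lemma pow_mulVec_norm_le {d : ℕ} (L : Matrix (Fin d) (Fin d) ℝ) (n : ℕ) (z : Fin d → ℝ) :
    ‖ev ((L ^ n).mulVec z)‖ ≤ (opNorm L) ^ n * ‖ev z‖ := by
  induction n with
  | zero => simp [Matrix.one_mulVec]
  | succ n ih =>
      have h1 : (L ^ (n+1)).mulVec z = L.mulVec ((L ^ n).mulVec z) := by
        rw [pow_succ', ← Matrix.mulVec_mulVec]
      rw [h1]
      calc ‖ev (L.mulVec ((L ^ n).mulVec z))‖ ≤ opNorm L * ‖ev ((L ^ n).mulVec z)‖ :=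
            ev_mulVec_norm_le _ _
        _ ≤ opNorm L * ((opNorm L) ^ n * ‖ev z‖) :=
            mul_le_mul_of_nonneg_left ih (opNorm_nonneg L)
        _ = (opNorm L) ^ (n+1) * ‖ev z‖ := by ring

/- dot-product / mulVec sum helpers -/

lemma dotProduct_sum_right {n : ℕ} {ι : Type*} (s : Finset ι) (u : Fin n → ℝ)
    (f : ι → Fin n → ℝ) :
    dotProduct u (∑ j ∈ s, f j) = ∑ j ∈ s, dotProduct u (f j) := by
  simp only [dotProduct, Finset.sum_apply, Finset.mul_sum]
  exact Finset.sum_comm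

lemma sum_dotProduct' {n : ℕ} {ι : Type*} (s : Finset ι) (f : ι → Fin n → ℝ) (z : Fin n → ℝ) :
    dotProduct (∑ j ∈ s, f j) z = ∑ j ∈ s, dotProduct (f j) z := by
  simp only [dotProduct, Finset.sum_apply, Finset.sum_mul]
  exact Finset.sum_comm

lemma mulVec_sum_right {m n : ℕ} {ι : Type*} (Amat : Matrix (Fin m) (Fin n) ℝ) (s : Finset ι)
    (f : ι → Fin n → ℝ) :
    Amat.mulVec (∑ j ∈ s, f j) = ∑ j ∈ s, Amat.mulVec (f j) := by
  funext i
  simp only [Matrix.mulVec, dotProduct, Finset.sum_apply, Finset.mul_sum]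
  exact Finset.sum_comm

lemma sum_mulVec' {m n : ℕ} {ι : Type*} (s : Finset ι) (f : ι → Matrix (Fin m) (Fin n) ℝ)
    (x : Fin n → ℝ) :
    (∑ j ∈ s, f j).mulVec x = ∑ j ∈ s, (f j).mulVec x := by
  classical
  induction s using Finset.induction_on with
  | empty => simp [Matrix.zero_mulVec]
  | insert _ _ h ih =>
      rw [Finset.sum_insert h, Finset.sum_insert h, Matrix.add_mulVec, ih]

lemma transpose_dot {m n : ℕ} (C : Matrix (Fin m) (Fin n) ℝ) (x : Fin n → ℝ) (z : Fin m → ℝ) :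
    dotProduct x (Cᵀ.mulVec z) = dotProduct (C.mulVec x) z := by
  rw [Matrix.dotProduct_mulVec, Matrix.vecMul_transpose]

/- positive semidefinite helpers -/

lemma psd_dot_nonneg {n : ℕ} {Amat : Matrix (Fin n) (Fin n) ℝ} (h : Amat.PosSemidef)
    (x : Fin n → ℝ) : 0 ≤ dotProduct x (Amat.mulVec x) := by
  simpa using h.dotProduct_mulVec_nonneg x

lemma psd_trace_nonneg {n : ℕ} {Amat : Matrix (Fin n) (Fin n) ℝ} (h : Amat.PosSemidef) :
    0 ≤ Amat.trace := by
  rw [Matrix.trace]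
  refine Finset.sum_nonneg fun i _ => ?_
  have := h.dotProduct_mulVec_nonneg (Pi.single i 1)
  simpa [dotProduct, Matrix.mulVec_single, Pi.single_apply] using this

end Aux

set_option maxHeartbeats 3000000 in
/-- **Lemma (finite-horizon cost of a strongly stable controller vs. steady state).** -/
theorem finite_horizon_cost_bound (d k : ℕ) (σ κ γ α₁ : ℝ) (hσ : 0 < σ)
    (A : Matrix (Fin d) (Fin d) ℝ) (B : Matrix (Fin d) (Fin k) ℝ)
    (K : Matrix (Fin k) (Fin d) ℝ) (hK : opNorm K ≤ κ)
    (hM : StronglyStable κ γ (A + B * K))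
    (Q : Matrix (Fin d) (Fin d) ℝ) (R : Matrix (Fin k) (Fin k) ℝ)
    (hQ : Q.PosSemidef) (hR : R.PosSemidef)
    (hQn : opNorm Q ≤ α₁) (hRn : opNorm R ≤ α₁)
    (P : Matrix (Fin d) (Fin d) ℝ) (hP : P.PosDef)
    (hLyap : P = Q + Kᵀ * R * K + (A + B * K)ᵀ * P * (A + B * K))
    (x₁ : Fin d → ℝ) (t : ℕ) (ht : 1 ≤ t) :
    ∫ g : Fin t → Fin d → ℝ,
        (∑ s ∈ Finset.Icc 1 t,
          dotProduct (stateTraj (A + B * K) x₁ (noiseExt g) s)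
            ((Q + Kᵀ * R * K).mulVec (stateTraj (A + B * K) x₁ (noiseExt g) s)))
        ∂(Measure.pi fun _ : Fin t =>
            (Measure.pi fun _ : Fin d => gaussianReal 0 ⟨σ ^ 2, sq_nonneg σ⟩))
      ≤ t * σ ^ 2 * Matrix.trace P + (2 * α₁ * κ ^ 4 / γ) * ∑ i, x₁ i ^ 2 := by
  obtain ⟨hκ, hγ0, hγ1, H, L, hHunit, hMeq, hLn, hHn⟩ := hM
  set vv : ℝ≥0 := ⟨σ ^ 2, sq_nonneg σ⟩ with hvv
  set M := A + B * K with hMdef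
  set S := Q + Kᵀ * R * K with hSdef
  have hvne : vv ≠ 0 := by
    intro h0
    have : (vv : ℝ) = 0 := by rw [h0]; rfl
    have hσ2 : (vv : ℝ) = σ ^ 2 := rfl
    nlinarith [hσ]
  have hvcoe : (vv : ℝ) = σ ^ 2 := rfl
  -- notations
  set μt := Measure.pi fun _ : Fin t => Measure.pi fun _ : Fin d => gaussianReal 0 vv with hμt
  haveI : IsProbabilityMeasure μt := by
    rw [hμt]; infer_instance
  -- matrices in the expansion
  set Nmat : ℕ → Fin t → Matrix (Fin d) (Fin d) ℝ :=
    fun s j => if (j:ℕ) + 2 ≤ s then M ^ (s - 2 - (j:ℕ)) else 0 with hNmat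
  set u : ℕ → Fin d → ℝ := fun s => (M ^ (s-1)).mulVec x₁ with hu
  set b1 : ℕ → Fin t → Fin d → ℝ := fun s j => Matrix.vecMul (u s) (S * Nmat s j) with hb1
  set b2 : ℕ → Fin t → Fin d → ℝ := fun s j => Matrix.vecMul (S.mulVec (u s)) (Nmat s j) with hb2
  set Em : ℕ → Fin t → Fin t → Matrix (Fin d) (Fin d) ℝ :=
    fun s j j' => (Nmat s j)ᵀ * (S * Nmat s j') with hEm
  set cc : ℕ → ℝ := fun s => dotProduct (u s) (S.mulVec (u s)) with hcc
  -- trajectory formula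
  have hX : ∀ (g : Fin t → Fin d → ℝ) (s : ℕ), 1 ≤ s → s ≤ t →
      stateTraj M x₁ (noiseExt g) s = u s + ∑ j : Fin t, (Nmat s j).mulVec (g j) := by
    intro g s hs1
    induction s, hs1 using Nat.le_induction with
    | base =>
        intro _
        have h0 : stateTraj M x₁ (noiseExt g) 1 = x₁ := rfl
        have hz : ∀ j : Fin t, (Nmat 1 j).mulVec (g j) = 0 := by
          intro j
          have : Nmat 1 j = 0 := by rw [hNmat]; simp only; rw [if_neg (by omega)]
          rw [this, Matrix.zero_mulVec]
        rw [h0, Finset.sum_congr rfl fun j _ => hz j]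
        have hu1 : u 1 = x₁ := by rw [hu]; simp only; rw [Nat.sub_self, pow_zero, Matrix.one_mulVec]
        rw [hu1]
        simp
    | succ s hs ih =>
        intro hst
        have hsle : s ≤ t := le_trans (Nat.le_succ s) hst
        obtain ⟨r, rfl⟩ : ∃ r, s = r + 1 := ⟨s - 1, by omega⟩
        have hstep : stateTraj M x₁ (noiseExt g) (r+1+1)
            = M.mulVec (stateTraj M x₁ (noiseExt g) (r+1)) + noiseExt g (r+1) := rfl
        have hnoise : noiseExt g (r+1) = g ⟨r, by omega⟩ := by
          have hcond : 1 ≤ r+1 ∧ r+1 ≤ t := ⟨by omega, by omega⟩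
          show (if h : 1 ≤ r+1 ∧ r+1 ≤ t then g ⟨r+1-1, by omega⟩ else 0) = g ⟨r, by omega⟩
          rw [dif_pos hcond]
          congr 1
        have hukey : M.mulVec (u (r+1)) = u (r+1+1) := by
          rw [hu]; simp only [Nat.add_sub_cancel]
          rw [Matrix.mulVec_mulVec, ← pow_succ']
        have hkey : ∀ j : Fin t, (Nmat (r+1+1) j).mulVec (g j)
            = (M * Nmat (r+1) j).mulVec (g j)
              + (if j = (⟨r, by omega⟩ : Fin t) then g j else 0) := by
          intro j
          rcases eq_or_ne j (⟨r, by omega⟩ : Fin t) with rfl | hne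
          · have h1 : Nmat (r+1+1) (⟨r, by omega⟩ : Fin t) = 1 := by
              rw [hNmat]; simp only [Fin.val_mk]
              rw [if_pos (by omega), show r+1+1-2-r = 0 by omega, pow_zero]
            have h2 : Nmat (r+1) (⟨r, by omega⟩ : Fin t) = 0 := by
              rw [hNmat]; simp only [Fin.val_mk]
              rw [if_neg (by omega)]
            rw [h1, h2, Matrix.one_mulVec, mul_zero, Matrix.zero_mulVec, zero_add, if_pos rfl]
          · have hval : (j:ℕ) ≠ r := by
              intro hc; exact hne (Fin.ext hc)
            rw [if_neg hne, add_zero]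
            have : Nmat (r+1+1) j = M * Nmat (r+1) j := by
              by_cases hc : (j:ℕ) + 2 ≤ r + 1
              · rw [hNmat]; simp only
                rw [if_pos (by omega), if_pos hc,
                  show r+1+1-2-(j:ℕ) = (r+1-2-(j:ℕ)) + 1 by omega, pow_succ']
              · rw [hNmat]; simp only
                rw [if_neg (by omega), if_neg hc, mul_zero]
            rw [this]
        calc stateTraj M x₁ (noiseExt g) (r+1+1)
            = M.mulVec (u (r+1) + ∑ j : Fin t, (Nmat (r+1) j).mulVec (g j))
              + g ⟨r, by omega⟩ := by rw [hstep, ih hsle, hnoise]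
          _ = u (r+1+1) + (∑ j : Fin t, (M * Nmat (r+1) j).mulVec (g j)
              + g ⟨r, by omega⟩) := by
              rw [Matrix.mulVec_add, mulVec_sum_right, hukey, add_assoc]
              congr 2
              exact Finset.sum_congr rfl fun j _ => Matrix.mulVec_mulVec _ _ _
          _ = u (r+1+1) + ∑ j : Fin t, (Nmat (r+1+1) j).mulVec (g j) := by
              congr 1
              rw [Finset.sum_congr rfl fun j _ => hkey j, Finset.sum_add_distrib]
              congr 1
              rw [Finset.sum_ite_eq' Finset.univ (⟨r, by omega⟩ : Fin t) g]
              simp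
  -- pointwise expansion of the quadratic form
  have hsplit : ∀ (g : Fin t → Fin d → ℝ) (s : ℕ), 1 ≤ s → s ≤ t →
      dotProduct (stateTraj M x₁ (noiseExt g) s)
          (S.mulVec (stateTraj M x₁ (noiseExt g) s))
        = cc s + ((∑ j : Fin t, dotProduct (b1 s j) (g j)
            + ∑ j : Fin t, dotProduct (b2 s j) (g j))
            + ∑ j : Fin t, ∑ j' : Fin t,
                dotProduct (g j) ((Em s j j').mulVec (g j'))) := by
    intro g s h1 h2
    rw [hX g s h1 h2]
    have e1 : S.mulVec (u s + ∑ j : Fin t, (Nmat s j).mulVec (g j))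
        = S.mulVec (u s) + ∑ j : Fin t, (S * Nmat s j).mulVec (g j) := by
      rw [Matrix.mulVec_add, mulVec_sum_right]
      congr 1
      exact Finset.sum_congr rfl fun j _ => Matrix.mulVec_mulVec _ _ _
    rw [e1, dotProduct_add, add_dotProduct, add_dotProduct]
    have hA : dotProduct (u s) (S.mulVec (u s)) = cc s := rfl
    have hB : dotProduct (∑ j : Fin t, (Nmat s j).mulVec (g j)) (S.mulVec (u s))
        = ∑ j : Fin t, dotProduct (b2 s j) (g j) := by
      rw [sum_dotProduct']
      refine Finset.sum_congr rfl fun j _ => ?_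
      rw [dotProduct_comm, Matrix.dotProduct_mulVec]
    have hC : dotProduct (u s) (∑ j : Fin t, (S * Nmat s j).mulVec (g j))
        = ∑ j : Fin t, dotProduct (b1 s j) (g j) := by
      rw [dotProduct_sum_right]
      refine Finset.sum_congr rfl fun j _ => ?_
      rw [Matrix.dotProduct_mulVec]
    have hD : dotProduct (∑ j : Fin t, (Nmat s j).mulVec (g j))
          (∑ j' : Fin t, (S * Nmat s j').mulVec (g j'))
        = ∑ j : Fin t, ∑ j' : Fin t,
            dotProduct (g j) ((Em s j j').mulVec (g j')) := by
      rw [sum_dotProduct']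
      refine Finset.sum_congr rfl fun j _ => ?_
      rw [dotProduct_sum_right]
      refine Finset.sum_congr rfl fun j' _ => ?_
      rw [← transpose_dot (Nmat s j) (g j), Matrix.mulVec_mulVec]
    rw [hA, hB, hC, hD]
    ring
  -- integrability of the pieces
  have hIlin1 : ∀ s : ℕ, Integrable
      (fun g : Fin t → Fin d → ℝ => ∑ j : Fin t, dotProduct (b1 s j) (g j)) μt :=
    fun s => integrable_finset_sum _ fun j _ => lin_integrable hvne (b1 s j) j
  have hIlin2 : ∀ s : ℕ, Integrable
      (fun g : Fin t → Fin d → ℝ => ∑ j : Fin t, dotProduct (b2 s j) (g j)) μt :=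
    fun s => integrable_finset_sum _ fun j _ => lin_integrable hvne (b2 s j) j
  have hIbil : ∀ s : ℕ, Integrable
      (fun g : Fin t → Fin d → ℝ => ∑ j : Fin t, ∑ j' : Fin t,
        dotProduct (g j) ((Em s j j').mulVec (g j'))) μt :=
    fun s => integrable_finset_sum _ fun j _ => integrable_finset_sum _ fun j' _ =>
      bil_integrable hvne (Em s j j') j j'
  have hIs : ∀ s : ℕ, Integrable (fun g : Fin t → Fin d → ℝ =>
      cc s + ((∑ j : Fin t, dotProduct (b1 s j) (g j)
        + ∑ j : Fin t, dotProduct (b2 s j) (g j))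
        + ∑ j : Fin t, ∑ j' : Fin t,
            dotProduct (g j) ((Em s j j').mulVec (g j')))) μt :=
    fun s => (integrable_const _).add (((hIlin1 s).add (hIlin2 s)).add (hIbil s))
  -- the value of the integral
  have hval : (∫ g : Fin t → Fin d → ℝ,
        (∑ s ∈ Finset.Icc 1 t,
          dotProduct (stateTraj M x₁ (noiseExt g) s)
            (S.mulVec (stateTraj M x₁ (noiseExt g) s))) ∂μt)
      = ∑ s ∈ Finset.Icc 1 t, (cc s + σ ^ 2 * ∑ j : Fin t, Matrix.trace (Em s j j)) := by
    have hcongr : (∫ g : Fin t → Fin d → ℝ,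
          (∑ s ∈ Finset.Icc 1 t,
            dotProduct (stateTraj M x₁ (noiseExt g) s)
              (S.mulVec (stateTraj M x₁ (noiseExt g) s))) ∂μt)
        = ∫ g : Fin t → Fin d → ℝ,
            (∑ s ∈ Finset.Icc 1 t, (cc s + ((∑ j : Fin t, dotProduct (b1 s j) (g j)
              + ∑ j : Fin t, dotProduct (b2 s j) (g j))
              + ∑ j : Fin t, ∑ j' : Fin t,
                  dotProduct (g j) ((Em s j j').mulVec (g j'))))) ∂μt := by
      refine integral_congr_ae (Filter.Eventually.of_forall fun g => ?_)
      refine Finset.sum_congr rfl fun s hs => ?_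
      rw [Finset.mem_Icc] at hs
      exact hsplit g s hs.1 hs.2
    rw [hcongr, integral_finset_sum _ fun s _ => hIs s]
    refine Finset.sum_congr rfl fun s _ => ?_
    have hadd1 : Integrable (fun g : Fin t → Fin d → ℝ =>
        ∑ j : Fin t, dotProduct (b1 s j) (g j)
          + ∑ j : Fin t, dotProduct (b2 s j) (g j)) μt := (hIlin1 s).add (hIlin2 s)
    have hadd2 : Integrable (fun g : Fin t → Fin d → ℝ =>
        (∑ j : Fin t, dotProduct (b1 s j) (g j)
          + ∑ j : Fin t, dotProduct (b2 s j) (g j))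
          + ∑ j : Fin t, ∑ j' : Fin t,
              dotProduct (g j) ((Em s j j').mulVec (g j'))) μt :=
      hadd1.add (hIbil s)
    rw [integral_add (integrable_const (cc s)) hadd2,
      integral_add hadd1 (hIbil s),
      integral_add (hIlin1 s) (hIlin2 s)]
    have hc0 : (∫ _g : Fin t → Fin d → ℝ, cc s ∂μt) = cc s := by
      rw [integral_const]; simp
    have hl1 : (∫ g : Fin t → Fin d → ℝ,
        (∑ j : Fin t, dotProduct (b1 s j) (g j)) ∂μt) = 0 := by
      rw [integral_finset_sum _ fun j _ => lin_integrable hvne (b1 s j) j]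
      exact Finset.sum_eq_zero fun j _ => lin_integral hvne (b1 s j) j
    have hl2 : (∫ g : Fin t → Fin d → ℝ,
        (∑ j : Fin t, dotProduct (b2 s j) (g j)) ∂μt) = 0 := by
      rw [integral_finset_sum _ fun j _ => lin_integrable hvne (b2 s j) j]
      exact Finset.sum_eq_zero fun j _ => lin_integral hvne (b2 s j) j
    have hbb : (∫ g : Fin t → Fin d → ℝ,
        (∑ j : Fin t, ∑ j' : Fin t,
          dotProduct (g j) ((Em s j j').mulVec (g j'))) ∂μt)
        = σ ^ 2 * ∑ j : Fin t, Matrix.trace (Em s j j) := by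
      rw [integral_finset_sum _ fun j _ => integrable_finset_sum _ fun j' _ =>
        bil_integrable hvne (Em s j j') j j']
      have : ∀ j : Fin t, (∫ g : Fin t → Fin d → ℝ,
          (∑ j' : Fin t, dotProduct (g j) ((Em s j j').mulVec (g j'))) ∂μt)
          = σ ^ 2 * Matrix.trace (Em s j j) := by
        intro j
        rw [integral_finset_sum _ fun j' _ => bil_integrable hvne (Em s j j') j j']
        rw [Finset.sum_congr rfl fun j' _ => bil_integral hvne (Em s j j') j j']
        rw [Finset.sum_ite_eq Finset.univ j (fun j' => (vv:ℝ) * Matrix.trace (Em s j j'))]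
        simp [hvcoe]
      rw [Finset.sum_congr rfl fun j _ => this j, Finset.mul_sum]
    rw [hc0, hl1, hl2, hbb]
    ring
  -- Lyapunov partial sums
  have hLyS : P = S + Mᵀ * P * M := hLyap
  have hLy : ∀ n : ℕ, P = (∑ e ∈ Finset.range n, (M^e)ᵀ * (S * M^e)) + (M^n)ᵀ * P * M^n := by
    intro n
    induction n with
    | zero => simp
    | succ n ih =>
        have hrem : (M^(n+1))ᵀ * P * M^(n+1) = (M^n)ᵀ * (Mᵀ * P * M) * M^n := by
          rw [pow_succ', Matrix.transpose_mul]
          noncomm_ring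
        calc P = (∑ e ∈ Finset.range n, (M^e)ᵀ * (S * M^e)) + (M^n)ᵀ * P * M^n := ih
          _ = (∑ e ∈ Finset.range n, (M^e)ᵀ * (S * M^e)) + (M^n)ᵀ * (S + Mᵀ * P * M) * M^n := by
              rw [← hLyS]
          _ = ((∑ e ∈ Finset.range n, (M^e)ᵀ * (S * M^e)) + (M^n)ᵀ * (S * M^n))
              + (M^n)ᵀ * (Mᵀ * P * M) * M^n := by noncomm_ring
          _ = (∑ e ∈ Finset.range (n+1), (M^e)ᵀ * (S * M^e)) + (M^(n+1))ᵀ * P * M^(n+1) := by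
              rw [Finset.sum_range_succ, hrem]
  -- psd facts
  have hSpsd : S.PosSemidef := by
    have h2 := hR.conjTranspose_mul_mul_same K
    rw [Matrix.conjTranspose_eq_transpose_of_trivial] at h2
    exact hQ.add h2
  have hrem_psd : ∀ n : ℕ, ((M^n)ᵀ * P * M^n).PosSemidef := by
    intro n
    have h2 := hP.posSemidef.conjTranspose_mul_mul_same (M^n)
    rwa [Matrix.conjTranspose_eq_transpose_of_trivial] at h2
  have hTrP : ∀ n : ℕ, (∑ e ∈ Finset.range n, Matrix.trace ((M^e)ᵀ * (S * M^e)))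
      ≤ Matrix.trace P := by
    intro n
    have h := congrArg Matrix.trace (hLy n)
    rw [Matrix.trace_add, Matrix.trace_sum] at h
    have h2 := psd_trace_nonneg (hrem_psd n)
    linarith
  -- trace bound for the noise part
  have hTr : ∀ s ∈ Finset.Icc 1 t, (∑ j : Fin t, Matrix.trace (Em s j j)) ≤ Matrix.trace P := by
    intro s hs
    rw [Finset.mem_Icc] at hs
    have hterm : ∀ j : Fin t, Matrix.trace (Em s j j)
        = (fun e : ℕ => Matrix.trace ((M^e)ᵀ * (S * M^e))) (s - 2 - (j:ℕ))
            * (if (j:ℕ) + 2 ≤ s then 1 else 0) := by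
      intro j
      rcases le_or_gt ((j:ℕ) + 2) s with hc | hc
      · rw [if_pos hc, mul_one, hEm, hNmat]
        simp only
        rw [if_pos hc]
      · rw [if_neg (by omega), mul_zero, hEm, hNmat]
        simp only
        rw [if_neg (by omega)]
        simp
    rw [Finset.sum_congr rfl fun j _ => hterm j]
    rw [Fin.sum_univ_eq_sum_range
      (fun jn => (fun e : ℕ => Matrix.trace ((M^e)ᵀ * (S * M^e))) (s - 2 - jn)
        * (if jn + 2 ≤ s then 1 else 0)) t]
    have hsub : Finset.range (s-1) ⊆ Finset.range t := by
      apply Finset.range_subset_range.mpr; omega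
    have hsum_eq : (∑ jn ∈ Finset.range t,
        (fun e : ℕ => Matrix.trace ((M^e)ᵀ * (S * M^e))) (s - 2 - jn)
          * (if jn + 2 ≤ s then 1 else 0))
        = ∑ jn ∈ Finset.range (s-1),
            (fun e : ℕ => Matrix.trace ((M^e)ᵀ * (S * M^e))) (s - 2 - jn) := by
      rw [← Finset.sum_subset hsub]
      · refine Finset.sum_congr rfl fun jn hjn => ?_
        rw [Finset.mem_range] at hjn
        rw [if_pos (by omega), mul_one]
      · intro jn _ hjn
        rw [Finset.mem_range] at hjn
        rw [if_neg (by omega), mul_zero]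
    rw [hsum_eq]
    have hreflect : (∑ jn ∈ Finset.range (s-1),
        (fun e : ℕ => Matrix.trace ((M^e)ᵀ * (S * M^e))) (s - 2 - jn))
        = ∑ e ∈ Finset.range (s-1), Matrix.trace ((M^e)ᵀ * (S * M^e)) := by
      have := Finset.sum_range_reflect
        (fun e : ℕ => Matrix.trace ((M^e)ᵀ * (S * M^e))) (s-1)
      rw [← this]
      refine Finset.sum_congr rfl fun jn hjn => ?_
      rfl
    rw [hreflect]
    exact hTrP (s-1)
  -- the deterministic part
  have hCs : (∑ s ∈ Finset.Icc 1 t, cc s)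
      ≤ dotProduct x₁ (P.mulVec x₁) := by
    have hccval : ∀ s : ℕ, cc s
        = dotProduct x₁ (((M^(s-1))ᵀ * (S * M^(s-1))).mulVec x₁) := by
      intro s
      rw [hcc, hu]
      simp only
      rw [← Matrix.mulVec_mulVec (x₁) ((M^(s-1))ᵀ) ((S * M^(s-1)))]
      rw [transpose_dot, ← Matrix.mulVec_mulVec]
    have hsum : (∑ s ∈ Finset.Icc 1 t, cc s)
        = dotProduct x₁ ((∑ e ∈ Finset.range t, (M^e)ᵀ * (S * M^e)).mulVec x₁) := by
      rw [sum_mulVec', dotProduct_sum_right]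
      rw [show Finset.Icc 1 t = Finset.Ico 1 (t+1) by rw [Finset.Ico_add_one_right_eq_Icc]]
      rw [Finset.sum_Ico_eq_sum_range]
      simp only [Nat.add_sub_cancel]
      refine Finset.sum_congr rfl fun e _ => ?_
      rw [hccval (1+e), show 1 + e - 1 = e by omega]
    rw [hsum]
    have hdiff := psd_dot_nonneg (hrem_psd t) x₁
    have hq := congrArg (fun Y => dotProduct x₁ (Y.mulVec x₁)) (hLy t)
    simp only [Matrix.add_mulVec, dotProduct_add] at hq
    linarith
  -- quadratic form bound via strong stability
  have hκ0 : (0:ℝ) ≤ κ := le_trans zero_le_one hκ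
  have hα₁0 : 0 ≤ α₁ := le_trans (opNorm_nonneg Q) hQn
  have h1γ : (0:ℝ) ≤ 1 - γ := by linarith
  have hqS : ∀ y : Fin d → ℝ, dotProduct y (S.mulVec y)
      ≤ 2 * α₁ * κ ^ 2 * ‖ev y‖ ^ 2 := by
    intro y
    have hQle : dotProduct y (Q.mulVec y) ≤ α₁ * ‖ev y‖ ^ 2 := by
      have h1 := dot_mulVec_le Q y y
      nlinarith [norm_nonneg (ev y), opNorm_nonneg Q]
    have hRle : dotProduct y ((Kᵀ * R * K).mulVec y) ≤ α₁ * κ ^ 2 * ‖ev y‖ ^ 2 := by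
      have h1 : (Kᵀ * R * K).mulVec y = Kᵀ.mulVec (R.mulVec (K.mulVec y)) := by
        rw [← Matrix.mulVec_mulVec, ← Matrix.mulVec_mulVec]
      rw [h1, transpose_dot K y (R.mulVec (K.mulVec y))]
      have h2 := dot_mulVec_le R (K.mulVec y) (K.mulVec y)
      have h3 := ev_mulVec_norm_le K y
      have h4 : ‖ev (K.mulVec y)‖ ≤ κ * ‖ev y‖ :=
        le_trans h3 (mul_le_mul_of_nonneg_right hK (norm_nonneg _))
      have h5 : ‖ev (K.mulVec y)‖ * ‖ev (K.mulVec y)‖ ≤ (κ * ‖ev y‖) * (κ * ‖ev y‖) :=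
        mul_self_le_mul_self (norm_nonneg _) h4
      have h6 : opNorm R * (‖ev (K.mulVec y)‖ * ‖ev (K.mulVec y)‖)
          ≤ α₁ * ((κ * ‖ev y‖) * (κ * ‖ev y‖)) :=
        mul_le_mul hRn h5 (mul_self_nonneg _) hα₁0
      linarith [h2, h6]
    have hsum : dotProduct y (S.mulVec y)
        = dotProduct y (Q.mulVec y) + dotProduct y ((Kᵀ * R * K).mulVec y) := by
      rw [hSdef, Matrix.add_mulVec, dotProduct_add]
    have hκ2 : (1:ℝ) ≤ κ ^ 2 := by nlinarith
    have hmul : 0 ≤ α₁ * κ ^ 2 * ‖ev y‖ ^ 2 - α₁ * ‖ev y‖ ^ 2 := by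
      nlinarith [mul_nonneg hα₁0 (sq_nonneg ‖ev y‖), hκ2]
    linarith [hQle, hRle, hsum, hmul]
  have hMn : ∀ (n : ℕ) (y : Fin d → ℝ),
      ‖ev ((M^n).mulVec y)‖ ≤ κ * (1-γ)^n * ‖ev y‖ := by
    have hdet : IsUnit H.det := (Matrix.isUnit_iff_isUnit_det H).mp hHunit
    have hHiH : H⁻¹ * H = 1 := Matrix.nonsing_inv_mul H hdet
    have hHHi : H * H⁻¹ = 1 := Matrix.mul_nonsing_inv H hdet
    have hpow : ∀ n : ℕ, M^n = H * L^n * H⁻¹ := by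
      intro n
      induction n with
      | zero => rw [pow_zero, pow_zero, mul_one, hHHi]
      | succ n ih =>
          rw [pow_succ, ih, hMeq]
          rw [show H * L^n * H⁻¹ * (H * L * H⁻¹) = H * L^n * (H⁻¹ * H) * L * H⁻¹ by
            noncomm_ring, hHiH, mul_one, pow_succ]
          noncomm_ring
    intro n y
    rw [hpow n, ← Matrix.mulVec_mulVec, ← Matrix.mulVec_mulVec]
    have s1 : ‖ev (H.mulVec ((L^n).mulVec (H⁻¹.mulVec y)))‖
        ≤ opNorm H * ‖ev ((L^n).mulVec (H⁻¹.mulVec y))‖ := ev_mulVec_norm_le _ _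
    have s2 : ‖ev ((L^n).mulVec (H⁻¹.mulVec y))‖
        ≤ (opNorm L)^n * ‖ev (H⁻¹.mulVec y)‖ := pow_mulVec_norm_le _ _ _
    have s3 : ‖ev (H⁻¹.mulVec y)‖ ≤ opNorm H⁻¹ * ‖ev y‖ := ev_mulVec_norm_le _ _
    have hLpow : (opNorm L)^n ≤ (1-γ)^n := pow_le_pow_left₀ (opNorm_nonneg L) hLn n
    have hnn : (0:ℝ) ≤ (opNorm L)^n := pow_nonneg (opNorm_nonneg L) n
    have hnn2 : (0:ℝ) ≤ (1-γ)^n := pow_nonneg h1γ n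
    calc ‖ev (H.mulVec ((L^n).mulVec (H⁻¹.mulVec y)))‖
        ≤ opNorm H * ((opNorm L)^n * (opNorm H⁻¹ * ‖ev y‖)) := by
          refine le_trans s1 (mul_le_mul_of_nonneg_left ?_ (opNorm_nonneg H))
          refine le_trans s2 (mul_le_mul_of_nonneg_left s3 hnn)
      _ = (opNorm H * opNorm H⁻¹) * ((opNorm L)^n * ‖ev y‖) := by ring
      _ ≤ κ * ((1-γ)^n * ‖ev y‖) := by
          refine mul_le_mul hHn (mul_le_mul_of_nonneg_right hLpow (norm_nonneg _)) ?_ hκ0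
          exact mul_nonneg hnn (norm_nonneg _)
      _ = κ * (1-γ)^n * ‖ev y‖ := by ring
  -- quadratic form of P bound
  have hqP : dotProduct x₁ (P.mulVec x₁)
      ≤ (2 * α₁ * κ ^ 4 / γ) * ∑ i, x₁ i ^ 2 := by
    set r : ℝ := (1-γ)^2 with hr
    have hr0 : 0 ≤ r := sq_nonneg _
    have hr1 : r < 1 := by nlinarith
    have h1r : 0 < 1 - r := by linarith
    set X : ℝ := ‖ev x₁‖ ^ 2 with hXdef
    have hX0 : 0 ≤ X := sq_nonneg _
    have hgeo : ∀ n : ℕ, (∑ e ∈ Finset.range n, r ^ e) ≤ 1 / γ := by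
      intro n
      rw [geom_sum_eq (by linarith : r ≠ 1) n]
      rw [show (r^n - 1)/(r - 1) = (1 - r^n)/(1-r) by rw [← neg_div_neg_eq]; ring_nf]
      rw [div_le_div_iff₀ h1r hγ0]
      have hrn : 0 ≤ r ^ n := pow_nonneg hr0 n
      nlinarith
    have hbound : ∀ n : ℕ, dotProduct x₁ (P.mulVec x₁)
        ≤ (2 * α₁ * κ ^ 4 / γ) * X + (opNorm P * κ ^ 2 * X) * r ^ n := by
      intro n
      have hq := congrArg (fun Y => dotProduct x₁ (Y.mulVec x₁)) (hLy n)
      simp only [Matrix.add_mulVec, dotProduct_add] at hq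
      have hT1 : dotProduct x₁
          ((∑ e ∈ Finset.range n, (M^e)ᵀ * (S * M^e)).mulVec x₁)
          ≤ (2 * α₁ * κ ^ 4) * X * ∑ e ∈ Finset.range n, r ^ e := by
        rw [sum_mulVec', dotProduct_sum_right, Finset.mul_sum]
        refine Finset.sum_le_sum fun e _ => ?_
        have he1 : dotProduct x₁ (((M^e)ᵀ * (S * M^e)).mulVec x₁)
            = dotProduct ((M^e).mulVec x₁) (S.mulVec ((M^e).mulVec x₁)) := by
          rw [← Matrix.mulVec_mulVec x₁ ((M^e)ᵀ) ((S * M^e)), transpose_dot,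
            ← Matrix.mulVec_mulVec]
        rw [he1]
        have he2 := hqS ((M^e).mulVec x₁)
        have he3 := hMn e x₁
        have hrr : ((1-γ)^e)^2 = r ^ e := by
          rw [hr, ← pow_mul, ← pow_mul, Nat.mul_comm]
        have he4 : ‖ev ((M^e).mulVec x₁)‖ ^ 2 ≤ κ ^ 2 * r ^ e * X := by
          have h0 := mul_self_le_mul_self (norm_nonneg (ev ((M^e).mulVec x₁))) he3
          have h1 : (κ * (1-γ)^e * ‖ev x₁‖) * (κ * (1-γ)^e * ‖ev x₁‖)
              = κ ^ 2 * r ^ e * X := by rw [← hrr, hXdef]; ring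
          have h2 : ‖ev ((M^e).mulVec x₁)‖ ^ 2
              ≤ (κ * (1-γ)^e * ‖ev x₁‖) * (κ * (1-γ)^e * ‖ev x₁‖) := by
            rw [sq]; exact h0
          rw [h1] at h2; exact h2
        have he5 : 2*α₁*κ^2 * ‖ev ((M^e).mulVec x₁)‖^2 ≤ 2*α₁*κ^2 * (κ^2 * r^e * X) :=
          mul_le_mul_of_nonneg_left he4 (by positivity)
        linarith [he2, he5]
      have hT2 : dotProduct x₁ (((M^n)ᵀ * P * M^n).mulVec x₁)
          ≤ (opNorm P * κ ^ 2 * X) * r ^ n := by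
        have he1 : dotProduct x₁ (((M^n)ᵀ * P * M^n).mulVec x₁)
            = dotProduct ((M^n).mulVec x₁) (P.mulVec ((M^n).mulVec x₁)) := by
          rw [Matrix.mul_assoc, ← Matrix.mulVec_mulVec x₁ ((M^n)ᵀ) ((P * M^n)), transpose_dot,
            ← Matrix.mulVec_mulVec]
        rw [he1]
        have he2 := dot_mulVec_le P ((M^n).mulVec x₁) ((M^n).mulVec x₁)
        have he3 := hMn n x₁
        have hrr : ((1-γ)^n)^2 = r ^ n := by
          rw [hr, ← pow_mul, ← pow_mul, Nat.mul_comm]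
        have he4 : ‖ev ((M^n).mulVec x₁)‖ ^ 2 ≤ κ ^ 2 * r ^ n * X := by
          have h0 := mul_self_le_mul_self (norm_nonneg (ev ((M^n).mulVec x₁))) he3
          have h1 : (κ * (1-γ)^n * ‖ev x₁‖) * (κ * (1-γ)^n * ‖ev x₁‖)
              = κ ^ 2 * r ^ n * X := by rw [← hrr, hXdef]; ring
          have h2 : ‖ev ((M^n).mulVec x₁)‖ ^ 2
              ≤ (κ * (1-γ)^n * ‖ev x₁‖) * (κ * (1-γ)^n * ‖ev x₁‖) := by
            rw [sq]; exact h0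
          rw [h1] at h2; exact h2
        have he5 : opNorm P * (‖ev ((M^n).mulVec x₁)‖ * ‖ev ((M^n).mulVec x₁)‖)
            ≤ opNorm P * (κ^2 * r^n * X) := by
          refine mul_le_mul_of_nonneg_left ?_ (opNorm_nonneg P)
          have := he4
          rw [sq] at this
          linarith
        linarith [he2, he5]
      have hgeon := hgeo n
      have h2ak : 0 ≤ 2 * α₁ * κ ^ 4 := by positivity
      have hT1' : dotProduct x₁
          ((∑ e ∈ Finset.range n, (M^e)ᵀ * (S * M^e)).mulVec x₁)
          ≤ (2 * α₁ * κ ^ 4 / γ) * X := by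
        calc dotProduct x₁ ((∑ e ∈ Finset.range n, (M^e)ᵀ * (S * M^e)).mulVec x₁)
            ≤ (2 * α₁ * κ ^ 4) * X * ∑ e ∈ Finset.range n, r ^ e := hT1
          _ ≤ (2 * α₁ * κ ^ 4) * X * (1/γ) := by
              refine mul_le_mul_of_nonneg_left hgeon ?_
              positivity
          _ = (2 * α₁ * κ ^ 4 / γ) * X := by ring
      linarith
    have hXsum : X = ∑ i, x₁ i ^ 2 := ev_norm_sq x₁
    have htend : Filter.Tendsto
        (fun n : ℕ => (2 * α₁ * κ ^ 4 / γ) * X + (opNorm P * κ ^ 2 * X) * r ^ n)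
        Filter.atTop (nhds ((2 * α₁ * κ ^ 4 / γ) * X + (opNorm P * κ ^ 2 * X) * 0)) := by
      exact Filter.Tendsto.const_add _
        ((tendsto_pow_atTop_nhds_zero_of_lt_one hr0 hr1).const_mul _)
    have hle := ge_of_tendsto htend (Filter.Eventually.of_forall hbound)
    rw [mul_zero, add_zero] at hle
    rw [← hXsum]
    linarith
  -- assemble
  rw [hval]
  have hfin : (∑ s ∈ Finset.Icc 1 t, (cc s + σ ^ 2 * ∑ j : Fin t, Matrix.trace (Em s j j)))
      ≤ (∑ s ∈ Finset.Icc 1 t, cc s) + (t : ℝ) * (σ ^ 2 * Matrix.trace P) := by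
    rw [Finset.sum_add_distrib]
    have h1 : (∑ s ∈ Finset.Icc 1 t, σ ^ 2 * ∑ j : Fin t, Matrix.trace (Em s j j))
        ≤ ∑ _s ∈ Finset.Icc 1 t, σ ^ 2 * Matrix.trace P := by
      refine Finset.sum_le_sum fun s hs => ?_
      exact mul_le_mul_of_nonneg_left (hTr s hs) (sq_nonneg σ)
    have h2 : (∑ _s ∈ Finset.Icc 1 t, σ ^ 2 * Matrix.trace P)
        = (t : ℝ) * (σ ^ 2 * Matrix.trace P) := by
      rw [Finset.sum_const, Nat.card_Icc]
      simp only [Nat.add_sub_cancel, nsmul_eq_mul]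
    linarith
  have : (t : ℝ) * (σ ^ 2 * Matrix.trace P) = t * σ ^ 2 * Matrix.trace P := by ring
  linarith [hfin, hCs, hqP]

end
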